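/- Let G be a finite simple graph on n vertices. There exists a bijection σ : {0,1,…,n−1} → V(G) such that (a) every connected component of G is an interval under σ (i.e., for all indices x < y < z, if σ(x) and σ(z) lie in the same connected component C, then σ(y) ∈ C), and (b) whenever σ(i) and σ(i+1) lie in the same connected component, σ(i) is adjacent to σ(i+1), if and only if every connected component of G contains a Hamiltonian path of that component. -/

import Mathlib

lemma walk_of_adj {V : Type*} (G : SimpleGraph V) (f : ℕ → V) :
    ∀ (k a : ℕ), (∀ i, a ≤ i → i < a + k → G.Adj (f i) (f (i + 1))) →
      ∃ p : G.Walk (f a) (f (a + k)),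
        p.support = (List.range (k + 1)).map (fun j => f (a + j)) := by
  intro k
  induction k with
  | zero => intro a _; exact ⟨SimpleGraph.Walk.nil, by simp [List.range_succ]⟩
  | succ k ih =>
    intro a h
    obtain ⟨p, hp⟩ := ih (a + 1) (fun i h1 h2 => h i (by omega) (by omega))
    have hadj : G.Adj (f a) (f (a + 1)) := h a le_rfl (by omega)
    have he : a + 1 + k = a + (k + 1) := by omega
    refine ⟨SimpleGraph.Walk.cons hadj (p.copy rfl (congrArg f he)), ?_⟩
    rw [SimpleGraph.Walk.support_cons, SimpleGraph.Walk.support_copy, hp]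
    conv_rhs => rw [List.range_succ_eq_map]
    simp only [List.map_cons, List.map_map, Nat.add_zero, List.cons.injEq]
    refine ⟨trivial, ?_⟩
    apply List.map_congr_left
    intro j _
    simp only [Function.comp_apply, Nat.succ_eq_add_one]
    congr 1
    omega

/-- Let `G` be a finite simple graph on `n` vertices. There exists a bijection
`σ : Fin n ≃ V` such that (a) every connected component of `G` is an interval under
`σ`, and (b) whenever `σ i` and `σ (i+1)` lie in the same connected component they are
adjacent, if and only if every connected component of `G` contains a Hamiltonian path
of that component (a path of `G` whose support is exactly the vertex set of the
component, visiting each vertex once). -/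
theorem stmt_2 {V : Type*} [Fintype V] [DecidableEq V] (G : SimpleGraph V)
    (n : ℕ) (hcard : Fintype.card V = n) :
    (∃ σ : Fin n ≃ V,
        (∀ x y z : Fin n, x < y → y < z →
          G.connectedComponentMk (σ x) = G.connectedComponentMk (σ z) →
          G.connectedComponentMk (σ y) = G.connectedComponentMk (σ x)) ∧
        (∀ (i : ℕ) (h : i + 1 < n),
          G.connectedComponentMk (σ ⟨i, by omega⟩) =
              G.connectedComponentMk (σ ⟨i + 1, h⟩) →
            G.Adj (σ ⟨i, by omega⟩) (σ ⟨i + 1, h⟩))) ↔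
      (∀ c : G.ConnectedComponent, ∃ (u v : V) (p : G.Walk u v),
        p.IsPath ∧ ∀ w : V, w ∈ p.support ↔ G.connectedComponentMk w = c) := by
  classical
  constructor
  · rintro ⟨σ, ha, hb⟩ c
    obtain ⟨v0, hv0⟩ := c.exists_rep
    set S : Finset (Fin n) :=
      Finset.univ.filter (fun i => G.connectedComponentMk (σ i) = c) with hS_def
    have hS : S.Nonempty := by
      refine ⟨σ.symm v0, ?_⟩
      simp only [hS_def, Finset.mem_filter, Finset.mem_univ, true_and,
        Equiv.apply_symm_apply]
      exact hv0
    set a := S.min' hS with ha_def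
    set b := S.max' hS with hb_def
    have hamem : G.connectedComponentMk (σ a) = c :=
      (Finset.mem_filter.1 (S.min'_mem hS)).2
    have hbmem : G.connectedComponentMk (σ b) = c :=
      (Finset.mem_filter.1 (S.max'_mem hS)).2
    have hmem : ∀ i : Fin n, a ≤ i → i ≤ b → G.connectedComponentMk (σ i) = c := by
      intro i h1 h2
      rcases eq_or_lt_of_le h1 with rfl | h1
      · exact hamem
      rcases eq_or_lt_of_le h2 with rfl | h2
      · exact hbmem
      · have := ha a i b h1 h2 (hamem.trans hbmem.symm)
        rw [this, hamem]
    have hab : (a : ℕ) ≤ (b : ℕ) := S.min'_le b (S.max'_mem hS)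
    have hbn : (b : ℕ) < n := b.isLt
    set f : ℕ → V := fun i => if h : i < n then σ ⟨i, h⟩ else σ a with hf_def
    have hfn : ∀ (i : ℕ) (h : i < n), f i = σ ⟨i, h⟩ := by
      intro i h; simp [hf_def, h]
    set k := (b : ℕ) - (a : ℕ) with hk_def
    have hak : (a : ℕ) + k = (b : ℕ) := by omega
    have hadj : ∀ i, (a : ℕ) ≤ i → i < (a : ℕ) + k → G.Adj (f i) (f (i + 1)) := by
      intro i h1 h2
      have hi : i < n := by omega
      have hi1 : i + 1 < n := by omega
      rw [hfn i hi, hfn (i + 1) hi1]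
      refine hb i hi1 ?_
      have e1 : G.connectedComponentMk (σ ⟨i, hi⟩) = c :=
        hmem ⟨i, hi⟩ (show (a : ℕ) ≤ i from h1) (show i ≤ (b : ℕ) by omega)
      have e2 : G.connectedComponentMk (σ ⟨i + 1, hi1⟩) = c :=
        hmem ⟨i + 1, hi1⟩ (show (a : ℕ) ≤ i + 1 by omega)
          (show i + 1 ≤ (b : ℕ) by omega)
      exact e1.trans e2.symm
    obtain ⟨p, hp⟩ := walk_of_adj G f k (a : ℕ) hadj
    refine ⟨f a, f ((a : ℕ) + k), p, SimpleGraph.Walk.IsPath.mk' ?_, ?_⟩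
    · rw [hp]
      refine List.Nodup.map_on ?_ List.nodup_range
      intro j1 hj1 j2 hj2 heq
      rw [List.mem_range] at hj1 hj2
      have l1 : (a : ℕ) + j1 < n := by omega
      have l2 : (a : ℕ) + j2 < n := by omega
      rw [hfn _ l1, hfn _ l2] at heq
      have := σ.injective heq
      have := Fin.mk.injEq _ _ _ _ ▸ this
      omega
    · intro w
      rw [hp]
      constructor
      · intro hw
        obtain ⟨j, hj, rfl⟩ := List.mem_map.1 hw
        rw [List.mem_range] at hj
        have hlt : (a : ℕ) + j < n := by omega
        rw [hfn _ hlt]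
        exact hmem ⟨(a : ℕ) + j, hlt⟩ (show (a : ℕ) ≤ (a : ℕ) + j by omega)
          (show (a : ℕ) + j ≤ (b : ℕ) by omega)
      · intro hw
        set i := σ.symm w with hi_def
        have hiS : i ∈ S := by
          simp only [hS_def, Finset.mem_filter, Finset.mem_univ, true_and, hi_def,
            Equiv.apply_symm_apply]
          exact hw
        have h1 : (a : ℕ) ≤ (i : ℕ) := S.min'_le i hiS
        have h2 : (i : ℕ) ≤ (b : ℕ) := S.le_max' i hiS
        refine List.mem_map.2 ⟨(i : ℕ) - (a : ℕ), List.mem_range.2 (by omega), ?_⟩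
        have he : (a : ℕ) + ((i : ℕ) - (a : ℕ)) = (i : ℕ) := by omega
        rw [he, hfn _ i.isLt]
        rw [hi_def]
        simp
  · intro h
    choose u v p hpath hsupp using h
    set cs := (Finset.univ : Finset G.ConnectedComponent).toList with hcs_def
    have csnd : cs.Nodup := Finset.nodup_toList _
    have csmem : ∀ c, c ∈ cs := fun c => Finset.mem_toList.2 (Finset.mem_univ c)
    set blk : G.ConnectedComponent → List V := fun c => (p c).support with hblk_def
    have hblk : ∀ c w, w ∈ blk c ↔ G.connectedComponentMk w = c := fun c => hsupp c
    set L : List V := (cs.map blk).flatten with hL_def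
    have memL : ∀ w, w ∈ L :=
      fun w => List.mem_flatten.2 ⟨blk (G.connectedComponentMk w),
        List.mem_map_of_mem (csmem _), (hblk _ _).2 rfl⟩
    have nodupL : L.Nodup := by
      rw [hL_def, List.nodup_flatten]
      constructor
      · intro l hl
        obtain ⟨c, _, rfl⟩ := List.mem_map.1 hl
        exact (hpath c).support_nodup
      · refine (List.Pairwise.map blk ?_ csnd)
        intro c d hcd w hwc hwd
        exact hcd (((hblk c w).1 hwc).symm.trans ((hblk d w).1 hwd))
    have lenL : L.length = n := by
      have h1 : L.toFinset = Finset.univ := by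
        ext w; simp [memL w]
      have h2 := List.toFinset_card_of_nodup nodupL
      rw [h1] at h2
      rw [← h2, Finset.card_univ, hcard]
    have hblkne : ∀ c, blk c ≠ [] := fun c => (p c).support_ne_nil
    have hnonil : [] ∉ cs.map blk := by
      intro hmem
      obtain ⟨c, _, hc⟩ := List.mem_map.1 hmem
      exact hblkne c hc
    set K : V → ℕ := fun w => cs.idxOf (G.connectedComponentMk w) with hK_def
    have hKblk : ∀ c, ∀ w ∈ blk c, K w = cs.idxOf c := by
      intro c w hw
      show cs.idxOf (G.connectedComponentMk w) = cs.idxOf c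
      rw [(hblk c w).1 hw]
    have hchainK : List.IsChain (fun x y => K x ≤ K y) L := by
      rw [hL_def, List.isChain_flatten hnonil]
      constructor
      · intro l hl
        obtain ⟨c, _, rfl⟩ := List.mem_map.1 hl
        rw [List.isChain_iff_getElem]
        intro i hi
        rw [hKblk c _ (List.getElem_mem _), hKblk c _ (List.getElem_mem _)]
      · rw [List.isChain_map]
        rw [List.isChain_iff_getElem]
        intro i hi
        intro x hx y hy
        have hxm : x ∈ blk (cs.get ⟨i, by omega⟩) := List.mem_of_mem_getLast? hx
        have hym : y ∈ blk (cs.get ⟨i + 1, by omega⟩) := List.mem_of_mem_head? hy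
        rw [hKblk _ _ hxm, hKblk _ _ hym, List.get_idxOf csnd, List.get_idxOf csnd]
        simp
    haveI : Trans (fun x y : V => K x ≤ K y) (fun x y => K x ≤ K y) (fun x y => K x ≤ K y) := ⟨le_trans⟩
    have hpairK : List.Pairwise (fun x y => K x ≤ K y) L :=
      List.isChain_iff_pairwise.1 hchainK
    have hchainR : List.IsChain (fun x y =>
        G.connectedComponentMk x = G.connectedComponentMk y → G.Adj x y) L := by
      rw [hL_def, List.isChain_flatten hnonil]
      constructor
      · intro l hl
        obtain ⟨c, _, rfl⟩ := List.mem_map.1 hl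
        refine ((p c).isChain_adj_support).imp ?_
        intro a b hab _
        exact hab
      · rw [List.isChain_map]
        refine (List.Pairwise.isChain (R := (· ≠ ·)) csnd).imp ?_
        · intro c d hcd x hx y hy hcomp
          exfalso
          have hxm : x ∈ blk c := List.mem_of_mem_getLast? hx
          have hym : y ∈ blk d := List.mem_of_mem_head? hy
          exact hcd ((((hblk c x).1 hxm).symm.trans hcomp).trans ((hblk d y).1 hym))
    refine ⟨(finCongr lenL.symm).trans
      (List.Nodup.getEquivOfForallMemList L nodupL memL), ?_, ?_⟩
    · intro x y z hxy hyz hcomp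
      have hx : (x : ℕ) < L.length := by omega
      have hy : (y : ℕ) < L.length := by omega
      have hz : (z : ℕ) < L.length := by omega
      have hcomp' : G.connectedComponentMk (L.get ⟨x, hx⟩) =
          G.connectedComponentMk (L.get ⟨z, hz⟩) := hcomp
      show G.connectedComponentMk (L.get ⟨y, hy⟩) = G.connectedComponentMk (L.get ⟨x, hx⟩)
      have px := List.pairwise_iff_get.1 hpairK ⟨x, hx⟩ ⟨y, hy⟩
        (show (x : ℕ) < (y : ℕ) from hxy)
      have py := List.pairwise_iff_get.1 hpairK ⟨y, hy⟩ ⟨z, hz⟩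
        (show (y : ℕ) < (z : ℕ) from hyz)
      have hKeq : K (L.get ⟨x, hx⟩) = K (L.get ⟨z, hz⟩) := by
        show cs.idxOf _ = cs.idxOf _
        rw [hcomp']
      have hKy : K (L.get ⟨y, hy⟩) = K (L.get ⟨x, hx⟩) := by omega
      have i1 := List.idxOf_lt_length_iff.2 (csmem (G.connectedComponentMk (L.get ⟨y, hy⟩)))
      have i2 := List.idxOf_lt_length_iff.2 (csmem (G.connectedComponentMk (L.get ⟨x, hx⟩)))
      have e1 := List.idxOf_get i1
      have e2 := List.idxOf_get i2
      have efin : (⟨_, i1⟩ : Fin cs.length) = ⟨_, i2⟩ := Fin.ext hKy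
      rw [← e1, ← e2, efin]
    · intro i hi hcomp
      have := List.isChain_iff_getElem.1 hchainR i (by omega)
      exact this hcomp
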